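/- If p11 < p01, then for any ω, ω' ∈ [0,1] with ω ≤ ω', either T(ω) > ω' (so the crossing time L(ω,ω') = 1) or T^k(ω) ≤ ω' for all k ≥ 0 (so L(ω,ω') = ∞). That is, the crossing time min{k : T^k(ω) > ω'} for a negatively correlated channel takes only the values 0, 1, or ∞. -/
import Mathlib


theorem stmt5 (p01 p11 : ℝ) (h01 : p01 ∈ Set.Icc (0:ℝ) 1) (h11 : p11 ∈ Set.Icc (0:ℝ) 1)
    (hlt : p11 < p01)
    (T : ℝ → ℝ) (hT : ∀ ω, T ω = ω * p11 + (1 - ω) * p01)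
    (ω ω' : ℝ) (hω : ω ∈ Set.Icc (0:ℝ) 1) (hω' : ω' ∈ Set.Icc (0:ℝ) 1) (hle : ω ≤ ω') :
    T ω > ω' ∨ ∀ k : ℕ, T^[k] ω ≤ ω' := by
  obtain ⟨h01a, h01b⟩ := h01
  obtain ⟨h11a, h11b⟩ := h11
  by_cases h : T ω > ω'
  · exact Or.inl h
  · right
    push_neg at h
    have key : ∀ k, min ω (T ω) ≤ T^[k] ω ∧ T^[k] ω ≤ max ω (T ω) := by
      intro k
      induction k with
      | zero => exact ⟨min_le_left _ _, le_max_left _ _⟩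
      | succ k ih =>
        obtain ⟨h1, h2⟩ := ih
        rw [Function.iterate_succ_apply']
        set x := T^[k] ω with hx
        have hTx := hT x
        have hTω := hT ω
        have hTTω := hT (T ω)
        rcases le_total ω (T ω) with hc | hc
        · rw [min_eq_left hc] at h1 ⊢
          rw [max_eq_right hc] at h2 ⊢
          constructor
          · -- T x ≥ ω : T x ≥ T (T ω) = (1+c)(Tω-ω)+ω ≥ ω
            nlinarith [mul_nonneg (sub_nonneg.2 h1) (sub_nonneg.2 hle)]
          · nlinarith [mul_nonneg (sub_nonneg.2 h1) (sub_nonneg.2 (le_of_lt hlt))]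
        · rw [min_eq_right hc] at h1 ⊢
          rw [max_eq_left hc] at h2 ⊢
          constructor
          · nlinarith [mul_nonneg (sub_nonneg.2 h2) (sub_nonneg.2 (le_of_lt hlt))]
          · nlinarith [mul_nonneg (sub_nonneg.2 h2) (sub_nonneg.2 hle)]
    intro k
    exact le_trans (key k).2 (max_le hle h)
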